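/- If moreover a_0 > a_1 > ⋯ > a_n > 0 and a_k ≤ λ_k ≤ a_{k−1} for 1 ≤ k ≤ n, then v_i ≥ 0 for every 0 ≤ i ≤ n and ∑_{i=0}^{n} v_i/a_i = 1; in particular the point u = (√v_0, …, √v_n) ∈ ℝ^{n+1} lies on the ellipsoid ∑_{i=0}^{n} u_i²/a_i = 1. -/

import Mathlib

open Polynomial Finset

private lemma neg_prod_aux (s : Finset ℕ) (f : ℕ → ℝ) :
    ∏ i ∈ s, (-f i) = (-1)^s.card * ∏ i ∈ s, f i := by
  rw [← Finset.prod_const, ← Finset.prod_mul_distrib]; simp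

private lemma lc_basis {ι : Type*} [DecidableEq ι] {s : Finset ι} {v : ι → ℝ} {i : ι}
    (hvs : Set.InjOn v s) (hi : i ∈ s) :
    (Lagrange.basis s v i).leadingCoeff = Lagrange.nodalWeight s v i := by
  unfold Lagrange.basis Lagrange.nodalWeight
  rw [leadingCoeff_prod]
  refine Finset.prod_congr rfl fun j hj => ?_
  have hne : v i ≠ v j := fun h => (Finset.ne_of_mem_erase hj)
    (hvs (Finset.mem_of_mem_erase hj) hi h.symm) |>.elim
  unfold Lagrange.basisDivisor
  rw [leadingCoeff_mul, leadingCoeff_C, leadingCoeff_X_sub_C, mul_one]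

private lemma key_interp {ι : Type*} [DecidableEq ι] {s : Finset ι} {v : ι → ℝ}
    (hvs : Set.InjOn v s) (f : ℝ[X]) (hm : f.Monic) (hd : f.natDegree + 1 = s.card) :
    ∑ i ∈ s, f.eval (v i) * Lagrange.nodalWeight s v i = 1 := by
  have hlt : f.degree < (s.card : WithBot ℕ) := by
    refine lt_of_le_of_lt degree_le_natDegree ?_
    rw [← hd]; exact_mod_cast Nat.lt_succ_self _
  have h := Lagrange.eq_interpolate hvs hlt
  have hc := congrArg (fun p : ℝ[X] => p.coeff f.natDegree) h
  simp only [Lagrange.interpolate_apply, Polynomial.finset_sum_coeff,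
    Polynomial.coeff_C_mul] at hc
  rw [hm.coeff_natDegree] at hc
  rw [hc]
  refine Finset.sum_congr rfl fun i hi => ?_
  congr 1
  have hdb : (Lagrange.basis s v i).natDegree = s.card - 1 := Lagrange.natDegree_basis hvs hi
  have hfn : f.natDegree = (Lagrange.basis s v i).natDegree := by omega
  rw [hfn, coeff_natDegree, lc_basis hvs hi]

theorem stmt_12 (n : ℕ) (hn : 1 ≤ n) (a : ℕ → ℝ)
    (ha : ∀ i ≤ n, ∀ j ≤ n, i ≠ j → a i ≠ a j)
    (lam : ℕ → ℝ) (v : ℕ → ℝ)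
    (hv : ∀ i ≤ n, v i = a i * (∏ k ∈ Finset.Icc 1 n, (lam k - a i)) /
      ∏ j ∈ (Finset.range (n + 1)).erase i, (a j - a i))
    (hmono : ∀ i < n, a (i + 1) < a i) (hpos : 0 < a n)
    (hlam : ∀ k, 1 ≤ k → k ≤ n → a k ≤ lam k ∧ lam k ≤ a (k - 1)) :
    (∀ i ≤ n, 0 ≤ v i) ∧
    (∑ i ∈ Finset.range (n + 1), v i / a i = 1) ∧
    (∑ i ∈ Finset.range (n + 1), (Real.sqrt (v i)) ^ 2 / a i = 1) := by
  -- antitonicity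
  have hanti : ∀ i j, i ≤ j → j ≤ n → a j ≤ a i := by
    have key : ∀ d i, i + d ≤ n → a (i + d) ≤ a i := by
      intro d
      induction d with
      | zero => intro i _; simp
      | succ d ih =>
        intro i h
        have h1 : a (i + d + 1) < a (i + d) := hmono _ (by omega)
        have h2 : a (i + d) ≤ a i := ih i (by omega)
        calc a (i + (d + 1)) = a (i + d + 1) := by ring_nf
        _ ≤ a i := le_trans (le_of_lt h1) h2
    intro i j hij hj
    have := key (j - i) i (by omega)
    rwa [Nat.add_sub_cancel' hij] at this
  have hanti' : ∀ i j, i < j → j ≤ n → a j < a i := by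
    intro i j hij hj
    exact lt_of_le_of_lt (hanti (i+1) j hij hj) (hmono i (by omega))
  have hapos : ∀ i ≤ n, 0 < a i := fun i hi => lt_of_lt_of_le hpos (hanti i n hi le_rfl)
  -- Part 1 : nonnegativity
  have part1 : ∀ i ≤ n, 0 ≤ v i := by
    intro i hi
    set P1 := ∏ k ∈ Finset.Ioc 0 i, (lam k - a i) with hP1
    set P2 := ∏ k ∈ Finset.Ioc i n, (a i - lam k) with hP2
    set Q1 := ∏ j ∈ Finset.range i, (a j - a i) with hQ1
    set Q2 := ∏ j ∈ Finset.Ioc i n, (a i - a j) with hQ2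
    set e : ℝ := (-1)^(Finset.Ioc i n).card with he
    have hene : e ≠ 0 := by positivity
    have hN : ∏ k ∈ Finset.Icc 1 n, (lam k - a i) = P1 * (e * P2) := by
      have hIcc : Finset.Icc 1 n = Finset.Ioc 0 n := by ext x; simp; omega
      rw [hIcc, ← Finset.prod_Ioc_consecutive _ (Nat.zero_le i) hi]
      congr 1
      calc ∏ k ∈ Finset.Ioc i n, (lam k - a i)
          = ∏ k ∈ Finset.Ioc i n, -(a i - lam k) := by
            refine Finset.prod_congr rfl fun k _ => by ring
        _ = e * P2 := neg_prod_aux _ _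
    have hD : ∏ j ∈ (Finset.range (n + 1)).erase i, (a j - a i) = Q1 * (e * Q2) := by
      have hset : (Finset.range (n + 1)).erase i = Finset.range i ∪ Finset.Ioc i n := by
        ext x
        simp only [Finset.mem_erase, Finset.mem_range, Finset.mem_union, Finset.mem_Ioc]
        omega
      have hdisj : Disjoint (Finset.range i) (Finset.Ioc i n) := by
        rw [Finset.disjoint_left]
        intro x hx hx'
        simp only [Finset.mem_range] at hx
        simp only [Finset.mem_Ioc] at hx'
        omega
      rw [hset, Finset.prod_union hdisj]
      congr 1
      calc ∏ j ∈ Finset.Ioc i n, (a j - a i)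
          = ∏ j ∈ Finset.Ioc i n, -(a i - a j) := by
            refine Finset.prod_congr rfl fun j _ => by ring
        _ = e * Q2 := neg_prod_aux _ _
    have hP1nn : 0 ≤ P1 := by
      refine Finset.prod_nonneg fun k hk => ?_
      simp only [Finset.mem_Ioc] at hk
      have h1 := (hlam k hk.1 (le_trans hk.2 hi)).1
      have h2 := hanti k i hk.2 hi
      linarith
    have hP2nn : 0 ≤ P2 := by
      refine Finset.prod_nonneg fun k hk => ?_
      simp only [Finset.mem_Ioc] at hk
      have h1 := (hlam k (by omega) hk.2).2
      have h2 := hanti i (k - 1) (by omega) (by omega)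
      linarith
    have hQ1pos : 0 < Q1 := by
      refine Finset.prod_pos fun j hj => ?_
      simp only [Finset.mem_range] at hj
      have := hanti' j i hj hi
      linarith
    have hQ2pos : 0 < Q2 := by
      refine Finset.prod_pos fun j hj => ?_
      simp only [Finset.mem_Ioc] at hj
      have := hanti' i j hj.1 hj.2
      linarith
    rw [hv i hi, hN, hD]
    rw [show a i * (P1 * (e * P2)) = a i * (P1 * P2) * e by ring,
        show Q1 * (e * Q2) = Q1 * Q2 * e by ring,
        mul_div_mul_right _ _ hene]
    have := hapos i hi
    positivity
  -- Part 2 : the sum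
  have hinj : Set.InjOn a (Finset.range (n + 1) : Finset ℕ) := by
    intro x hx y hy hxy
    simp only [Finset.coe_range, Set.mem_Iio] at hx hy
    by_contra hne
    exact ha x (by omega) y (by omega) hne hxy
  have part2 : ∑ i ∈ Finset.range (n + 1), v i / a i = 1 := by
    set f : ℝ[X] := ∏ k ∈ Finset.Icc 1 n, (X - C (lam k)) with hf
    have hm : f.Monic := monic_prod_of_monic _ _ fun k _ => monic_X_sub_C _
    have hdeg : f.natDegree = n := by
      rw [hf, natDegree_prod_of_monic _ _ fun k _ => monic_X_sub_C _]
      simp [natDegree_X_sub_C, Nat.card_Icc]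
    have hkey := key_interp hinj f hm (by rw [hdeg, Finset.card_range])
    rw [← hkey]
    refine Finset.sum_congr rfl fun i hi => ?_
    rw [Finset.mem_range] at hi
    have hi' : i ≤ n := by omega
    have hai : a i ≠ 0 := ne_of_gt (hapos i hi')
    -- v i / a i = N / D
    set N := ∏ k ∈ Finset.Icc 1 n, (lam k - a i) with hNdef
    set D := ∏ j ∈ (Finset.range (n + 1)).erase i, (a j - a i) with hDdef
    have hvd : v i / a i = N / D := by
      rw [hv i hi', div_div, mul_comm (a i) N, mul_div_mul_right _ _ hai]
    rw [hvd]
    -- eval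
    have heval : f.eval (a i) = ∏ k ∈ Finset.Icc 1 n, (a i - lam k) := by
      simp [hf, eval_prod]
    have hw : Lagrange.nodalWeight (Finset.range (n + 1)) a i
        = (∏ j ∈ (Finset.range (n + 1)).erase i, (a i - a j))⁻¹ := by
      unfold Lagrange.nodalWeight
      rw [← Finset.prod_inv_distrib]
    have hcard : ((Finset.range (n + 1)).erase i).card = n := by
      rw [Finset.card_erase_of_mem (by simpa using Nat.lt_succ_of_le hi'), Finset.card_range]
      omega
    have hNeq : N = (-1)^n * ∏ k ∈ Finset.Icc 1 n, (a i - lam k) := by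
      calc N = ∏ k ∈ Finset.Icc 1 n, -(a i - lam k) := by
              refine Finset.prod_congr rfl fun k _ => by ring
        _ = (-1)^(Finset.Icc 1 n).card * ∏ k ∈ Finset.Icc 1 n, (a i - lam k) :=
            neg_prod_aux _ _
        _ = _ := by rw [Nat.card_Icc]; norm_num
    have hDeq : D = (-1)^n * ∏ j ∈ (Finset.range (n + 1)).erase i, (a i - a j) := by
      calc D = ∏ j ∈ (Finset.range (n + 1)).erase i, -(a i - a j) := by
              refine Finset.prod_congr rfl fun j _ => by ring
        _ = _ := by rw [neg_prod_aux, hcard]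
    rw [hNeq, hDeq, heval, hw, mul_div_mul_left _ _ (by positivity : ((-1:ℝ))^n ≠ 0),
      div_eq_mul_inv]
  refine ⟨part1, part2, ?_⟩
  rw [← part2]
  refine Finset.sum_congr rfl fun i hi => ?_
  rw [Finset.mem_range] at hi
  rw [Real.sq_sqrt (part1 i (by omega))]
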